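/- For all n ≥ 4, the number of permutations of {1,...,n} avoiding the patterns 132, 2341, 3241, and 54321 equals (4/3)n³ - 12n² + (128/3)n - 52. -/

import Mathlib

/-- A function `π : Fin n → Fin n` contains the pattern `p : Fin k → ℕ` if there is a
strictly increasing choice of indices whose images under `π` have the same pairwise
order relations as the entries of `p`. -/
def Contains {n k : ℕ} (π : Fin n → Fin n) (p : Fin k → ℕ) : Prop :=
  ∃ f : Fin k → Fin n, StrictMono f ∧ ∀ i j, p i < p j ↔ π (f i) < π (f j)

/-- `π` avoids the pattern `p`. -/
def Avoids {n k : ℕ} (π : Fin n → Fin n) (p : Fin k → ℕ) : Prop := ¬ Contains π p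

/-- The set of permutations of `Fin n` avoiding the patterns 132, 2341 and 3241,
i.e. the 132-avoiding two-stack sortable permutations. -/
def TSS132 (n : ℕ) : Set (Fin n → Fin n) :=
  {π | Function.Bijective π ∧ Avoids π ![1,3,2] ∧ Avoids π ![2,3,4,1] ∧ Avoids π ![3,2,4,1]}

/-- The Pell numbers. -/
def pell : ℕ → ℕ
  | 0 => 0
  | 1 => 1
  | n+2 => 2 * pell (n+1) + pell n

/-- Generalized containment for a sequence with values in `Fin N`. -/
def ContainsA {N m k : ℕ} (g : Fin m → Fin N) (p : Fin k → ℕ) : Prop :=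
  ∃ f : Fin k → Fin m, StrictMono f ∧ ∀ i j, p i < p j ↔ g (f i) < g (f j)

lemma contains_iff_containsA {n k : ℕ} (π : Fin n → Fin n) (p : Fin k → ℕ) :
    Contains π p ↔ ContainsA π p := Iff.rfl

lemma containsA_comp_left {N N' m k : ℕ} {h : Fin N → Fin N'} (hh : StrictMono h)
    {g : Fin m → Fin N} {p : Fin k → ℕ} :
    ContainsA (h ∘ g) p ↔ ContainsA g p := by
  constructor
  · rintro ⟨f, hf, hc⟩
    exact ⟨f, hf, fun i j => (hc i j).trans hh.lt_iff_lt⟩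
  · rintro ⟨f, hf, hc⟩
    exact ⟨f, hf, fun i j => (hc i j).trans hh.lt_iff_lt.symm⟩

lemma containsA_restrict {N m k k' : ℕ} {g : Fin m → Fin N} {p : Fin k → ℕ}
    (e : Fin k' → Fin k) (he : StrictMono e) (h : ContainsA g p) :
    ContainsA g (p ∘ e) := by
  obtain ⟨f, hf, hc⟩ := h
  exact ⟨f ∘ e, hf.comp he, fun i j => hc (e i) (e j)⟩

lemma containsA_congr_pattern {N m k : ℕ} {g : Fin m → Fin N} {p q : Fin k → ℕ}
    (hpq : ∀ i j, p i < p j ↔ q i < q j) :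
    ContainsA g p ↔ ContainsA g q := by
  constructor
  · rintro ⟨f, hf, hc⟩
    exact ⟨f, hf, fun i j => ((hpq i j).symm).trans (hc i j)⟩
  · rintro ⟨f, hf, hc⟩
    exact ⟨f, hf, fun i j => (hpq i j).trans (hc i j)⟩

lemma not_containsA_of_lt {N m k : ℕ} (g : Fin m → Fin N) (p : Fin k → ℕ)
    (h : m < k) : ¬ ContainsA g p := by
  rintro ⟨f, hf, -⟩
  have := Fintype.card_le_of_injective f hf.injective
  simp at this; omega


/-- Prepending a new maximum. -/
lemma containsA_cons {N m k : ℕ} {g : Fin m → Fin N} {v : Fin N}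
    (hgv : ∀ i, g i < v) (p : Fin (k+1) → ℕ) :
    ContainsA (Fin.cons v g : Fin (m+1) → Fin N) p ↔
      ContainsA g p ∨ ((∀ j, j ≠ 0 → p j < p 0) ∧ ContainsA g (p ∘ Fin.succ)) := by
  constructor
  · rintro ⟨f, hf, hc⟩
    by_cases h0 : f 0 = 0
    · right
      have hne : ∀ i : Fin (k+1), i ≠ 0 → f i ≠ 0 := by
        intro i hi
        have h1 : f 0 < f i := hf (Fin.pos_of_ne_zero hi)
        rw [h0] at h1
        exact Fin.pos_iff_ne_zero.mp h1
      have hval : ∀ (i : Fin (k+1)) (hi : i ≠ 0),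
          (Fin.cons v g : Fin (m+1) → Fin N) (f i) = g ((f i).pred (hne i hi)) := by
        intro i hi
        conv_lhs => rw [← Fin.succ_pred (f i) (hne i hi)]
        rw [Fin.cons_succ]
      constructor
      · intro j hj
        apply (hc j 0).mpr
        rw [h0, Fin.cons_zero, hval j hj]
        exact hgv _
      · refine ⟨fun i => (f i.succ).pred (hne i.succ (Fin.succ_ne_zero i)), ?_, ?_⟩
        · intro a b hab
          rw [Fin.pred_lt_pred_iff]
          exact hf (Fin.succ_lt_succ_iff.mpr hab)
        · intro i j
          have := hc i.succ j.succ
          rw [hval i.succ (Fin.succ_ne_zero i), hval j.succ (Fin.succ_ne_zero j)] at this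
          exact this
    · left
      have hne : ∀ i : Fin (k+1), f i ≠ 0 := by
        intro i
        rcases eq_or_ne i 0 with rfl | hi
        · exact h0
        · have h1 : f 0 < f i := hf (Fin.pos_of_ne_zero hi)
          exact Fin.pos_iff_ne_zero.mp (lt_of_le_of_lt (Fin.zero_le _) h1)
      have hval : ∀ i : Fin (k+1),
          (Fin.cons v g : Fin (m+1) → Fin N) (f i) = g ((f i).pred (hne i)) := by
        intro i
        conv_lhs => rw [← Fin.succ_pred (f i) (hne i)]
        rw [Fin.cons_succ]
      refine ⟨fun i => (f i).pred (hne i), ?_, ?_⟩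
      · intro a b hab
        rw [Fin.pred_lt_pred_iff]
        exact hf hab
      · intro i j
        have := hc i j
        rw [hval i, hval j] at this
        exact this
  · rintro (⟨f, hf, hc⟩ | ⟨hmax, f, hf, hc⟩)
    · refine ⟨Fin.succ ∘ f, Fin.strictMono_succ.comp hf, ?_⟩
      intro i j
      simpa [Fin.cons_succ] using hc i j
    · refine ⟨Fin.cons 0 (Fin.succ ∘ f), ?_, ?_⟩
      · intro a b hab
        induction a using Fin.cases with
        | zero =>
          induction b using Fin.cases with
          | zero => exact absurd hab (lt_irrefl _)
          | succ b => simpa using Fin.succ_pos (f b)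
        | succ a =>
          induction b using Fin.cases with
          | zero => exact absurd hab (Fin.not_lt_zero _)
          | succ b =>
            simp only [Fin.cons_succ, Function.comp_apply]
            exact Fin.succ_lt_succ_iff.mpr (hf (Fin.succ_lt_succ_iff.mp hab))
      · intro i j
        induction i using Fin.cases with
        | zero =>
          induction j using Fin.cases with
          | zero => simp
          | succ j =>
            simp only [Fin.cons_zero, Fin.cons_succ, Function.comp_apply, Fin.cons_succ]
            constructor
            · intro h; exact absurd h (not_lt_of_gt (hmax j.succ (Fin.succ_ne_zero j)))
            · intro h; exact absurd h (not_lt_of_gt (hgv (f j)))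
        | succ i =>
          induction j using Fin.cases with
          | zero =>
            simp only [Fin.cons_zero, Fin.cons_succ, Function.comp_apply]
            constructor
            · intro _; exact hgv (f i)
            · intro _; exact hmax i.succ (Fin.succ_ne_zero i)
          | succ j =>
            simp only [Fin.cons_succ, Function.comp_apply]
            exact hc i j

/-- Appending a new maximum. -/
lemma containsA_snoc {N m k : ℕ} {g : Fin m → Fin N} {v : Fin N}
    (hgv : ∀ i, g i < v) (p : Fin (k+1) → ℕ) :
    ContainsA (Fin.snoc g v : Fin (m+1) → Fin N) p ↔
      ContainsA g p ∨ ((∀ j, j ≠ Fin.last k → p j < p (Fin.last k)) ∧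
        ContainsA g (p ∘ Fin.castSucc)) := by
  constructor
  · rintro ⟨f, hf, hc⟩
    by_cases h0 : f (Fin.last k) = Fin.last m
    · right
      have hne : ∀ i : Fin (k+1), i ≠ Fin.last k → f i ≠ Fin.last m := by
        intro i hi
        have h1 : f i < f (Fin.last k) := hf (Fin.lt_last_iff_ne_last.mpr hi)
        rw [h0] at h1
        exact Fin.lt_last_iff_ne_last.mp h1
      have hval : ∀ (i : Fin (k+1)) (hi : i ≠ Fin.last k),
          (Fin.snoc g v : Fin (m+1) → Fin N) (f i) = g ((f i).castPred (hne i hi)) := by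
        intro i hi
        conv_lhs => rw [← Fin.castSucc_castPred (f i) (hne i hi)]
        rw [Fin.snoc_castSucc]
      constructor
      · intro j hj
        apply (hc j (Fin.last k)).mpr
        rw [h0, Fin.snoc_last, hval j hj]
        exact hgv _
      · refine ⟨fun i => (f i.castSucc).castPred
            (hne i.castSucc (Fin.castSucc_lt_last i).ne), ?_, ?_⟩
        · intro a b hab
          rw [Fin.castPred_lt_castPred_iff]
          exact hf (Fin.castSucc_lt_castSucc_iff.mpr hab)
        · intro i j
          have := hc i.castSucc j.castSucc
          rw [hval i.castSucc (Fin.castSucc_lt_last i).ne,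
            hval j.castSucc (Fin.castSucc_lt_last j).ne] at this
          exact this
    · left
      have hne : ∀ i : Fin (k+1), f i ≠ Fin.last m := by
        intro i
        rcases eq_or_ne i (Fin.last k) with rfl | hi
        · exact h0
        · have h1 : f i < f (Fin.last k) := hf (Fin.lt_last_iff_ne_last.mpr hi)
          exact Fin.lt_last_iff_ne_last.mp (lt_of_lt_of_le h1 (Fin.le_last _))
      have hval : ∀ i : Fin (k+1),
          (Fin.snoc g v : Fin (m+1) → Fin N) (f i) = g ((f i).castPred (hne i)) := by
        intro i
        conv_lhs => rw [← Fin.castSucc_castPred (f i) (hne i)]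
        rw [Fin.snoc_castSucc]
      refine ⟨fun i => (f i).castPred (hne i), ?_, ?_⟩
      · intro a b hab
        rw [Fin.castPred_lt_castPred_iff]
        exact hf hab
      · intro i j
        have := hc i j
        rw [hval i, hval j] at this
        exact this
  · rintro (⟨f, hf, hc⟩ | ⟨hmax, f, hf, hc⟩)
    · refine ⟨Fin.castSucc ∘ f, Fin.strictMono_castSucc.comp hf, ?_⟩
      intro i j
      simpa [Fin.snoc_castSucc] using hc i j
    · refine ⟨Fin.snoc (Fin.castSucc ∘ f) (Fin.last m), ?_, ?_⟩
      · intro a b hab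
        induction a using Fin.lastCases with
        | last => exact absurd hab (by simpa using not_lt_of_ge (Fin.le_last b))
        | cast a =>
          induction b using Fin.lastCases with
          | last =>
            simp only [Fin.snoc_castSucc, Fin.snoc_last, Function.comp_apply]
            exact Fin.castSucc_lt_last (f a)
          | cast b =>
            simp only [Fin.snoc_castSucc, Function.comp_apply]
            exact Fin.castSucc_lt_castSucc_iff.mpr (hf (Fin.castSucc_lt_castSucc_iff.mp hab))
      · intro i j
        induction i using Fin.lastCases with
        | last =>
          induction j using Fin.lastCases with
          | last => simp
          | cast j =>
            simp only [Fin.snoc_last, Fin.snoc_castSucc, Function.comp_apply]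
            constructor
            · intro h; exact absurd h (not_lt_of_gt (hmax j.castSucc (Fin.castSucc_lt_last j).ne))
            · intro h; exact absurd h (not_lt_of_gt (hgv (f j)))
        | cast i =>
          induction j using Fin.lastCases with
          | last =>
            simp only [Fin.snoc_last, Fin.snoc_castSucc, Function.comp_apply]
            constructor
            · intro _; exact hgv (f i)
            · intro _; exact hmax i.castSucc (Fin.castSucc_lt_last i).ne
          | cast j =>
            simp only [Fin.snoc_castSucc, Function.comp_apply]
            exact hc i j

/-- Prepending `v` then a new maximum `w` (so the sequence starts `v, w, ...` with
`w` the maximum and `v` bigger than everything else). -/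
lemma containsA_cons_cons {N m k : ℕ} {g : Fin m → Fin N} {v w : Fin N}
    (hgv : ∀ i, g i < v) (hvw : v < w) (p : Fin (k+2) → ℕ) :
    ContainsA (Fin.cons v (Fin.cons w g) : Fin (m+2) → Fin N) p ↔
      ContainsA g p ∨
      ((∀ j, j ≠ 0 → p j < p 0) ∧ ContainsA g (p ∘ Fin.succ)) ∨
      (p 0 < p 1 ∧ (∀ j, j ≠ 0 → j ≠ 1 → p j < p 0) ∧
        ContainsA g (fun i => p i.succ.succ)) := by
  set π : Fin (m+2) → Fin N := Fin.cons v (Fin.cons w g) with hπ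
  have hval : ∀ x : Fin m, π x.succ.succ = g x := by
    intro x; simp [hπ, Fin.cons_succ]
  have hval2 : ∀ y : Fin (m+2), 2 ≤ y.val → ∀ h : y.val - 2 < m, π y = g ⟨y.val - 2, h⟩ := by
    intro y hy h
    have hy2 : y = (⟨y.val - 2, h⟩ : Fin m).succ.succ := by
      apply Fin.ext; simp; omega
    rw [← hval ⟨y.val - 2, h⟩]
    exact congrArg π hy2
  have hv0 : π 0 = v := rfl
  have hw1 : π 1 = w := rfl
  constructor
  · rintro ⟨f, hf, hc⟩
    have hlt : ∀ i j : Fin (k+2), i < j → (f i).val < (f j).val := fun i j h => hf h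
    by_cases hA : f 0 = 0
    · by_cases hB : f 1 = 1
      · -- third disjunct
        right; right
        have h2 : ∀ j : Fin (k+2), j ≠ 0 → j ≠ 1 → 2 ≤ (f j).val := by
          intro j hj0 hj1
          have h1lt : (1 : Fin (k+2)) < j := by
            rw [Fin.lt_def]
            have := Fin.pos_of_ne_zero hj0
            rw [Fin.lt_def] at this
            simp at this ⊢
            have : j.val ≠ 1 := fun h => hj1 (Fin.ext (by simp [h]))
            omega
          have := hlt 1 j h1lt
          rw [hB] at this; simp at this; omega
        have hsub : ∀ j : Fin k, 2 ≤ (f j.succ.succ).val := by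
          intro j
          apply h2 <;> simp [Fin.ext_iff]
        have hm : ∀ j : Fin k, (f j.succ.succ).val - 2 < m := by
          intro j; have := (f j.succ.succ).isLt; have := hsub j; omega
        refine ⟨?_, ?_, ⟨fun i => ⟨(f i.succ.succ).val - 2, hm i⟩, ?_, ?_⟩⟩
        · apply (hc 0 1).mpr
          rw [hA, hB, hv0, hw1]; exact hvw
        · intro j hj0 hj1
          apply (hc j 0).mpr
          rw [hA, hv0, hval2 (f j) (h2 j hj0 hj1) (by have := (f j).isLt; have := h2 j hj0 hj1; omega)]
          exact hgv _
        · intro a b hab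
          have := hlt a.succ.succ b.succ.succ (by simpa using hab)
          simp [Fin.lt_def]
          have := hsub a; omega
        · intro i j
          have := hc i.succ.succ j.succ.succ
          rw [hval2 (f i.succ.succ) (hsub i) (hm i), hval2 (f j.succ.succ) (hsub j) (hm j)] at this
          exact this
      · -- f 0 = 0, f 1 ≥ 2 : second disjunct
        right; left
        have h2 : ∀ j : Fin (k+2), j ≠ 0 → 2 ≤ (f j).val := by
          intro j hj0
          have h1 : 1 ≤ (f j).val := by
            have := hlt 0 j (Fin.pos_of_ne_zero hj0)
            rw [hA] at this; simp only [Fin.val_zero] at this; omega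
          rcases eq_or_ne j 1 with rfl | hj1
          · have : (f 1).val ≠ 1 := fun h => hB (Fin.ext (by simpa using h))
            omega
          · have h1lt : (1 : Fin (k+2)) < j := by
              rw [Fin.lt_def]; simp
              have h0 : j.val ≠ 0 := fun h => hj0 (Fin.ext (by simpa using h))
              have : j.val ≠ 1 := fun h => hj1 (Fin.ext (by simpa using h))
              omega
            have hf1 : 1 ≤ (f 1).val := by
              have := hlt 0 1 (by simp [Fin.lt_def]); rw [hA] at this; simp only [Fin.val_zero] at this; omega
            have := hlt 1 j h1lt
            omega
        have hm : ∀ j : Fin (k+1), (f j.succ).val - 2 < m := by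
          intro j; have := (f j.succ).isLt; have := h2 j.succ (Fin.succ_ne_zero j); omega
        refine ⟨?_, ⟨fun i => ⟨(f i.succ).val - 2, hm i⟩, ?_, ?_⟩⟩
        · intro j hj
          apply (hc j 0).mpr
          rw [hA, hv0, hval2 (f j) (h2 j hj) (by have := (f j).isLt; have := h2 j hj; omega)]
          exact hgv _
        · intro a b hab
          have := hlt a.succ b.succ (by simpa using hab)
          simp [Fin.lt_def]
          have := h2 a.succ (Fin.succ_ne_zero a); omega
        · intro i j
          have := hc i.succ j.succ
          rw [hval2 (f i.succ) (h2 i.succ (Fin.succ_ne_zero i)) (hm i),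
            hval2 (f j.succ) (h2 j.succ (Fin.succ_ne_zero j)) (hm j)] at this
          exact this
    · by_cases hA1 : f 0 = 1
      · -- f 0 = 1 : second disjunct (π (f 0) = w is the max)
        right; left
        have h2 : ∀ j : Fin (k+2), j ≠ 0 → 2 ≤ (f j).val := by
          intro j hj0
          have := hlt 0 j (Fin.pos_of_ne_zero hj0)
          rw [hA1] at this; simp at this; omega
        have hm : ∀ j : Fin (k+1), (f j.succ).val - 2 < m := by
          intro j; have := (f j.succ).isLt; have := h2 j.succ (Fin.succ_ne_zero j); omega
        refine ⟨?_, ⟨fun i => ⟨(f i.succ).val - 2, hm i⟩, ?_, ?_⟩⟩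
        · intro j hj
          apply (hc j 0).mpr
          rw [hA1, hw1, hval2 (f j) (h2 j hj) (by have := (f j).isLt; have := h2 j hj; omega)]
          exact lt_trans (hgv _) hvw
        · intro a b hab
          have := hlt a.succ b.succ (by simpa using hab)
          simp [Fin.lt_def]
          have := h2 a.succ (Fin.succ_ne_zero a); omega
        · intro i j
          have := hc i.succ j.succ
          rw [hval2 (f i.succ) (h2 i.succ (Fin.succ_ne_zero i)) (hm i),
            hval2 (f j.succ) (h2 j.succ (Fin.succ_ne_zero j)) (hm j)] at this
          exact this
      · -- f 0 ≥ 2 : first disjunct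
        left
        have h2 : ∀ j : Fin (k+2), 2 ≤ (f j).val := by
          intro j
          have h0 : (f 0).val ≠ 0 := fun h => hA (Fin.ext (by simpa using h))
          have h1 : (f 0).val ≠ 1 := fun h => hA1 (Fin.ext (by simpa using h))
          rcases eq_or_ne j 0 with rfl | hj
          · omega
          · have := hlt 0 j (Fin.pos_of_ne_zero hj); omega
        have hm : ∀ j : Fin (k+2), (f j).val - 2 < m := by
          intro j; have := (f j).isLt; have := h2 j; omega
        refine ⟨fun i => ⟨(f i).val - 2, hm i⟩, ?_, ?_⟩
        · intro a b hab
          have := hlt a b hab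
          simp [Fin.lt_def]
          have := h2 a; omega
        · intro i j
          have := hc i j
          rw [hval2 (f i) (h2 i) (hm i), hval2 (f j) (h2 j) (hm j)] at this
          exact this
  · rintro (⟨f, hf, hc⟩ | ⟨hmax, f, hf, hc⟩ | ⟨h01, hmax, f, hf, hc⟩)
    · refine ⟨fun i => (f i).succ.succ, ?_, ?_⟩
      · intro a b hab
        simpa using hf hab
      · intro i j
        rw [hval, hval]
        exact hc i j
    · refine ⟨Fin.cons 0 (fun i => (f i).succ.succ), ?_, ?_⟩
      · intro a b hab
        induction a using Fin.cases with
        | zero =>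
          induction b using Fin.cases with
          | zero => exact absurd hab (lt_irrefl _)
          | succ b => simp [Fin.lt_def]
        | succ a =>
          induction b using Fin.cases with
          | zero => exact absurd hab (Fin.not_lt_zero _)
          | succ b =>
            simp only [Fin.cons_succ]
            simpa using hf (Fin.succ_lt_succ_iff.mp hab)
      · intro i j
        induction i using Fin.cases with
        | zero =>
          induction j using Fin.cases with
          | zero => simp
          | succ j =>
            simp only [Fin.cons_zero, Fin.cons_succ, hv0, hval]
            constructor
            · intro h; exact absurd h (not_lt_of_gt (hmax j.succ (Fin.succ_ne_zero j)))
            · intro h; exact absurd h (not_lt_of_gt (hgv (f j)))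
        | succ i =>
          induction j using Fin.cases with
          | zero =>
            simp only [Fin.cons_zero, Fin.cons_succ, hv0, hval]
            constructor
            · intro _; exact hgv (f i)
            · intro _; exact hmax i.succ (Fin.succ_ne_zero i)
          | succ j =>
            simp only [Fin.cons_succ, hval]
            exact hc i j
    · refine ⟨Fin.cons 0 (Fin.cons 1 (fun i => (f i).succ.succ)), ?_, ?_⟩
      · intro a b hab
        induction a using Fin.cases with
        | zero =>
          induction b using Fin.cases with
          | zero => exact absurd hab (lt_irrefl _)
          | succ b =>
            simp only [Fin.cons_zero, Fin.cons_succ]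
            induction b using Fin.cases with
            | zero => simp [Fin.lt_def]
            | succ b => simp [Fin.lt_def]
        | succ a =>
          induction b using Fin.cases with
          | zero => exact absurd hab (Fin.not_lt_zero _)
          | succ b =>
            simp only [Fin.cons_succ]
            have hab' : a < b := Fin.succ_lt_succ_iff.mp hab
            induction a using Fin.cases with
            | zero =>
              induction b using Fin.cases with
              | zero => exact absurd hab' (lt_irrefl _)
              | succ b => simp [Fin.lt_def]
            | succ a =>
              induction b using Fin.cases with
              | zero => exact absurd hab' (Fin.not_lt_zero _)
              | succ b =>
                simp only [Fin.cons_succ]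
                simpa using hf (Fin.succ_lt_succ_iff.mp hab')
      · have key : ∀ i j : Fin (k+2),
            (p i < p j ↔ π ((Fin.cons 0 (Fin.cons 1 (fun i => (f i).succ.succ)) : Fin (k+2) → Fin (m+2)) i)
              < π ((Fin.cons 0 (Fin.cons 1 (fun i => (f i).succ.succ)) : Fin (k+2) → Fin (m+2)) j)) := by
          intro i j
          induction i using Fin.cases with
          | zero =>
            induction j using Fin.cases with
            | zero => simp
            | succ j =>
              induction j using Fin.cases with
              | zero =>
                simp only [Fin.cons_zero, Fin.cons_succ, hv0, hw1]
                constructor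
                · intro _; exact hvw
                · intro _; exact h01
              | succ j =>
                simp only [Fin.cons_zero, Fin.cons_succ, hv0, hval]
                constructor
                · intro h
                  exact absurd h (not_lt_of_gt (hmax j.succ.succ (Fin.succ_ne_zero _)
                    (by simp [Fin.ext_iff])))
                · intro h; exact absurd h (not_lt_of_gt (hgv (f j)))
          | succ i =>
            induction j using Fin.cases with
            | zero =>
              induction i using Fin.cases with
              | zero =>
                simp only [Fin.cons_zero, Fin.cons_succ, hv0, hw1]
                constructor
                · intro h; exact absurd h (not_lt_of_gt h01)
                · intro h; exact absurd h (not_lt_of_gt hvw)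
              | succ i =>
                simp only [Fin.cons_zero, Fin.cons_succ, hv0, hval]
                constructor
                · intro _; exact hgv (f i)
                · intro _; exact hmax i.succ.succ (Fin.succ_ne_zero _) (by simp [Fin.ext_iff])
            | succ j =>
              induction i using Fin.cases with
              | zero =>
                induction j using Fin.cases with
                | zero => simp
                | succ j =>
                  simp only [Fin.cons_succ, hw1, hval]
                  constructor
                  · intro h
                    exact absurd h (not_lt_of_gt (lt_trans
                      (hmax j.succ.succ (Fin.succ_ne_zero _) (by simp [Fin.ext_iff])) h01))
                  · intro h; exact absurd h (not_lt_of_gt (lt_trans (hgv (f j)) hvw))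
              | succ i =>
                induction j using Fin.cases with
                | zero =>
                  simp only [Fin.cons_succ, hw1, hval]
                  constructor
                  · intro _; exact lt_trans (hgv (f i)) hvw
                  · intro _
                    exact lt_trans (hmax i.succ.succ (Fin.succ_ne_zero _) (by simp [Fin.ext_iff])) h01
                | succ j =>
                  simp only [Fin.cons_succ, hval]
                  exact hc i j
        exact key

/-- The decreasing pattern of length `d`. -/
def Dec (d : ℕ) : Fin d → ℕ := fun i => d - i.val

lemma dec_comp_succ (d : ℕ) : (Dec (d+1)) ∘ Fin.succ = Dec d := by
  funext i
  simp only [Dec, Function.comp_apply, Fin.val_succ]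
  omega

lemma dec_comp_succ_succ (d : ℕ) : (fun i : Fin d => Dec (d+2) i.succ.succ) = Dec d := by
  funext i
  simp only [Dec, Fin.val_succ]
  omega

lemma containsA_dec_mono {N m d : ℕ} {g : Fin m → Fin N}
    (h : ContainsA g (Dec (d+1))) : ContainsA g (Dec d) := by
  have h2 := containsA_restrict (Fin.castSucc : Fin d → Fin (d+1)) Fin.strictMono_castSucc h
  refine (containsA_congr_pattern ?_).mp h2
  intro i j
  simp [Dec, Function.comp]
  omega

section PatternTransfer

variable {N m : ℕ} {g : Fin m → Fin N} {v w : Fin N}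

lemma cons_132 (hgv : ∀ i, g i < v) :
    ContainsA (Fin.cons v g : Fin (m+1) → Fin N) ![1,3,2] ↔ ContainsA g ![1,3,2] := by
  rw [containsA_cons hgv]
  constructor
  · rintro (h | ⟨hmax, -⟩)
    · exact h
    · exact absurd (hmax 1 (by decide)) (by decide)
  · exact Or.inl

lemma cons_2341 (hgv : ∀ i, g i < v) :
    ContainsA (Fin.cons v g : Fin (m+1) → Fin N) ![2,3,4,1] ↔ ContainsA g ![2,3,4,1] := by
  rw [containsA_cons hgv]
  constructor
  · rintro (h | ⟨hmax, -⟩)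
    · exact h
    · exact absurd (hmax 1 (by decide)) (by decide)
  · exact Or.inl

lemma cons_3241 (hgv : ∀ i, g i < v) :
    ContainsA (Fin.cons v g : Fin (m+1) → Fin N) ![3,2,4,1] ↔ ContainsA g ![3,2,4,1] := by
  rw [containsA_cons hgv]
  constructor
  · rintro (h | ⟨hmax, -⟩)
    · exact h
    · exact absurd (hmax 2 (by decide)) (by decide)
  · exact Or.inl

lemma cons_dec {d : ℕ} (hgv : ∀ i, g i < v) :
    ContainsA (Fin.cons v g : Fin (m+1) → Fin N) (Dec (d+1)) ↔
      ContainsA g (Dec (d+1)) ∨ ContainsA g (Dec d) := by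
  rw [containsA_cons hgv]
  constructor
  · rintro (h | ⟨-, h⟩)
    · exact Or.inl h
    · right; rwa [dec_comp_succ] at h
  · rintro (h | h)
    · exact Or.inl h
    · right
      refine ⟨?_, by rwa [dec_comp_succ]⟩
      intro j hj
      have := Fin.pos_of_ne_zero hj
      simp only [Dec, Fin.lt_def, Fin.val_zero] at this ⊢
      omega

lemma snoc_132 (hgv : ∀ i, g i < v) :
    ContainsA (Fin.snoc g v : Fin (m+1) → Fin N) ![1,3,2] ↔ ContainsA g ![1,3,2] := by
  rw [containsA_snoc hgv]
  constructor
  · rintro (h | ⟨hmax, -⟩)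
    · exact h
    · exact absurd (hmax 1 (by decide)) (by decide)
  · exact Or.inl

lemma snoc_2341 (hgv : ∀ i, g i < v) :
    ContainsA (Fin.snoc g v : Fin (m+1) → Fin N) ![2,3,4,1] ↔ ContainsA g ![2,3,4,1] := by
  rw [containsA_snoc hgv]
  constructor
  · rintro (h | ⟨hmax, -⟩)
    · exact h
    · exact absurd (hmax 0 (by decide)) (by decide)
  · exact Or.inl

lemma snoc_3241 (hgv : ∀ i, g i < v) :
    ContainsA (Fin.snoc g v : Fin (m+1) → Fin N) ![3,2,4,1] ↔ ContainsA g ![3,2,4,1] := by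
  rw [containsA_snoc hgv]
  constructor
  · rintro (h | ⟨hmax, -⟩)
    · exact h
    · exact absurd (hmax 0 (by decide)) (by decide)
  · exact Or.inl

lemma snoc_dec {d : ℕ} (hgv : ∀ i, g i < v) :
    ContainsA (Fin.snoc g v : Fin (m+1) → Fin N) (Dec (d+2)) ↔ ContainsA g (Dec (d+2)) := by
  rw [containsA_snoc hgv]
  constructor
  · rintro (h | ⟨hmax, -⟩)
    · exact h
    · have := hmax 0 (by simp [Fin.ext_iff])
      simp [Dec, Fin.last] at this
  · exact Or.inl

lemma cc_132 (hgv : ∀ i, g i < v) (hvw : v < w) :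
    ContainsA (Fin.cons v (Fin.cons w g) : Fin (m+2) → Fin N) ![1,3,2] ↔
      ContainsA g ![1,3,2] := by
  rw [containsA_cons_cons hgv hvw]
  constructor
  · rintro (h | ⟨hmax, -⟩ | ⟨-, hmax, -⟩)
    · exact h
    · exact absurd (hmax 1 (by decide)) (by decide)
    · exact absurd (hmax 2 (by decide) (by decide)) (by decide)
  · exact Or.inl

lemma cc_2341 (hgv : ∀ i, g i < v) (hvw : v < w) :
    ContainsA (Fin.cons v (Fin.cons w g) : Fin (m+2) → Fin N) ![2,3,4,1] ↔
      ContainsA g ![2,3,4,1] := by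
  rw [containsA_cons_cons hgv hvw]
  constructor
  · rintro (h | ⟨hmax, -⟩ | ⟨-, hmax, -⟩)
    · exact h
    · exact absurd (hmax 1 (by decide)) (by decide)
    · exact absurd (hmax 2 (by decide) (by decide)) (by decide)
  · exact Or.inl

lemma cc_3241 (hgv : ∀ i, g i < v) (hvw : v < w) :
    ContainsA (Fin.cons v (Fin.cons w g) : Fin (m+2) → Fin N) ![3,2,4,1] ↔
      ContainsA g ![3,2,4,1] := by
  rw [containsA_cons_cons hgv hvw]
  constructor
  · rintro (h | ⟨hmax, -⟩ | ⟨-, hmax, -⟩)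
    · exact h
    · exact absurd (hmax 2 (by decide)) (by decide)
    · exact absurd (hmax 2 (by decide) (by decide)) (by decide)
  · exact Or.inl

lemma cc_dec {d : ℕ} (hgv : ∀ i, g i < v) (hvw : v < w) :
    ContainsA (Fin.cons v (Fin.cons w g) : Fin (m+2) → Fin N) (Dec (d+2)) ↔
      ContainsA g (Dec (d+2)) ∨ ContainsA g (Dec (d+1)) := by
  rw [containsA_cons_cons hgv hvw]
  constructor
  · rintro (h | ⟨-, h⟩ | ⟨h01, -, -⟩)
    · exact Or.inl h
    · right; rwa [show (Dec (d+2)) ∘ Fin.succ = Dec (d+1) from dec_comp_succ (d+1)] at h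
    · exfalso
      simp [Dec] at h01
  · rintro (h | h)
    · exact Or.inl h
    · right; left
      refine ⟨?_, by rwa [show (Dec (d+2)) ∘ Fin.succ = Dec (d+1) from dec_comp_succ (d+1)]⟩
      intro j hj
      have := Fin.pos_of_ne_zero hj
      simp only [Dec, Fin.lt_def, Fin.val_zero] at this ⊢
      omega

end PatternTransfer

def Sset (n d : ℕ) : Set (Fin n → Fin n) :=
  {π | Function.Bijective π ∧ Avoids π ![1,3,2] ∧ Avoids π ![2,3,4,1] ∧
    Avoids π ![3,2,4,1] ∧ Avoids π (Dec d)}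

lemma avoids_iff {n k : ℕ} (π : Fin n → Fin n) (p : Fin k → ℕ) :
    Avoids π p ↔ ¬ ContainsA π p := Iff.rfl

section Emap

variable {n d : ℕ}

lemma E_lt (σ : Fin n → Fin n) (i : Fin n) :
    (Fin.castSucc ∘ σ) i < Fin.last n := Fin.castSucc_lt_last (σ i)

lemma E_mem {σ : Fin n → Fin n} (hσ : σ ∈ Sset n (d+2)) :
    Fin.snoc (Fin.castSucc ∘ σ) (Fin.last n) ∈ Sset (n+1) (d+2) := by
  obtain ⟨hb, h1, h2, h3, h4⟩ := hσ
  have hcs : StrictMono (Fin.castSucc : Fin n → Fin (n+1)) := Fin.strictMono_castSucc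
  refine ⟨?_, ?_, ?_, ?_, ?_⟩
  · have hinj : Function.Injective (Fin.snoc (Fin.castSucc ∘ σ) (Fin.last n) :
        Fin (n+1) → Fin (n+1)) := by
      intro a b hab
      induction a using Fin.lastCases with
      | last =>
        induction b using Fin.lastCases with
        | last => rfl
        | cast b =>
          rw [Fin.snoc_last, Fin.snoc_castSucc] at hab
          exact absurd hab.symm (Fin.castSucc_lt_last (σ b)).ne
      | cast a =>
        induction b using Fin.lastCases with
        | last =>
          rw [Fin.snoc_last, Fin.snoc_castSucc] at hab
          exact absurd hab (Fin.castSucc_lt_last (σ a)).ne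
        | cast b =>
          rw [Fin.snoc_castSucc, Fin.snoc_castSucc] at hab
          exact congrArg Fin.castSucc (hb.injective (hcs.injective hab))
    exact Finite.injective_iff_bijective.mp hinj
  · rw [avoids_iff, snoc_132 (E_lt σ), containsA_comp_left hcs]; exact h1
  · rw [avoids_iff, snoc_2341 (E_lt σ), containsA_comp_left hcs]; exact h2
  · rw [avoids_iff, snoc_3241 (E_lt σ), containsA_comp_left hcs]; exact h3
  · rw [avoids_iff, snoc_dec (E_lt σ), containsA_comp_left hcs]; exact h4

lemma cardE (n d : ℕ) :
    Nat.card {π : Fin (n+1) → Fin (n+1) |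
        π ∈ Sset (n+1) (d+2) ∧ π (Fin.last n) = Fin.last n} =
      Nat.card (Sset n (d+2)) := by
  symm
  apply Nat.card_eq_of_bijective
    (f := fun σ : Sset n (d+2) =>
      (⟨Fin.snoc (Fin.castSucc ∘ (σ : Fin n → Fin n)) (Fin.last n),
        E_mem σ.2, by simp⟩ :
        {π : Fin (n+1) → Fin (n+1) |
          π ∈ Sset (n+1) (d+2) ∧ π (Fin.last n) = Fin.last n}))
  constructor
  · intro a b hab
    apply Subtype.ext
    funext i
    have := congrArg (fun f => (f : Fin (n+1) → Fin (n+1)) i.castSucc) (Subtype.ext_iff.mp hab)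
    simp only [Fin.snoc_castSucc] at this
    exact Fin.castSucc_injective n this
  · rintro ⟨π, hπ, hlast⟩
    have hb := hπ.1
    have hne : ∀ i : Fin n, π i.castSucc ≠ Fin.last n := by
      intro i h
      have := hb.injective (h.trans hlast.symm)
      exact absurd this (Fin.castSucc_lt_last i).ne
    set σ : Fin n → Fin n := fun i => (π i.castSucc).castPred (hne i) with hσdef
    have hrepr : π = Fin.snoc (Fin.castSucc ∘ σ) (Fin.last n) := by
      funext i
      induction i using Fin.lastCases with
      | last => rw [Fin.snoc_last, hlast]
      | cast i => rw [Fin.snoc_castSucc]; simp [hσdef]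
    have hcs : StrictMono (Fin.castSucc : Fin n → Fin (n+1)) := Fin.strictMono_castSucc
    have hσmem : σ ∈ Sset n (d+2) := by
      obtain ⟨hb', h1, h2, h3, h4⟩ := hπ
      rw [hrepr] at h1 h2 h3 h4 hb'
      refine ⟨?_, ?_, ?_, ?_, ?_⟩
      · apply Finite.injective_iff_bijective.mp
        intro a b hab
        have h5 : π a.castSucc = π b.castSucc := by
          have := congrArg Fin.castSucc hab
          simpa [hσdef, Fin.castSucc_castPred] using this
        exact Fin.castSucc_injective n (hb.injective h5)
      · rw [avoids_iff, snoc_132 (E_lt σ), containsA_comp_left hcs] at h1; exact h1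
      · rw [avoids_iff, snoc_2341 (E_lt σ), containsA_comp_left hcs] at h2; exact h2
      · rw [avoids_iff, snoc_3241 (E_lt σ), containsA_comp_left hcs] at h3; exact h3
      · rw [avoids_iff, snoc_dec (E_lt σ), containsA_comp_left hcs] at h4; exact h4
    exact ⟨⟨σ, hσmem⟩, Subtype.ext hrepr.symm⟩

end Emap

section F1map

variable {n d : ℕ}

lemma F1_mem {σ : Fin n → Fin n} (hσ : σ ∈ Sset n (d+2)) :
    Fin.cons (Fin.last n) (Fin.castSucc ∘ σ) ∈ Sset (n+1) (d+3) := by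
  obtain ⟨hb, h1, h2, h3, h4⟩ := hσ
  have hcs : StrictMono (Fin.castSucc : Fin n → Fin (n+1)) := Fin.strictMono_castSucc
  have hlt : ∀ i, (Fin.castSucc ∘ σ) i < Fin.last n := fun i => Fin.castSucc_lt_last (σ i)
  refine ⟨?_, ?_, ?_, ?_, ?_⟩
  · apply Finite.injective_iff_bijective.mp
    intro a b hab
    induction a using Fin.cases with
    | zero =>
      induction b using Fin.cases with
      | zero => rfl
      | succ b =>
        rw [Fin.cons_zero, Fin.cons_succ] at hab
        exact absurd hab.symm (hlt b).ne
    | succ a =>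
      induction b using Fin.cases with
      | zero =>
        rw [Fin.cons_zero, Fin.cons_succ] at hab
        exact absurd hab (hlt a).ne
      | succ b =>
        rw [Fin.cons_succ, Fin.cons_succ] at hab
        exact congrArg Fin.succ (hb.injective (hcs.injective hab))
  · rw [avoids_iff, cons_132 hlt, containsA_comp_left hcs]; exact h1
  · rw [avoids_iff, cons_2341 hlt, containsA_comp_left hcs]; exact h2
  · rw [avoids_iff, cons_3241 hlt, containsA_comp_left hcs]; exact h3
  · rw [avoids_iff, show d+3 = (d+2)+1 from rfl, cons_dec hlt]
    rintro (h | h)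
    · exact h4 (containsA_dec_mono ((containsA_comp_left hcs).mp h))
    · exact h4 ((containsA_comp_left hcs).mp h)

lemma cardF1 (n d : ℕ) :
    Nat.card {π : Fin (n+1) → Fin (n+1) |
        π ∈ Sset (n+1) (d+3) ∧ π 0 = Fin.last n} =
      Nat.card (Sset n (d+2)) := by
  symm
  apply Nat.card_eq_of_bijective
    (f := fun σ : Sset n (d+2) =>
      (⟨Fin.cons (Fin.last n) (Fin.castSucc ∘ (σ : Fin n → Fin n)),
        F1_mem σ.2, by simp⟩ :
        {π : Fin (n+1) → Fin (n+1) | π ∈ Sset (n+1) (d+3) ∧ π 0 = Fin.last n}))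
  constructor
  · intro a b hab
    apply Subtype.ext
    funext i
    have := congrArg (fun f => (f : Fin (n+1) → Fin (n+1)) i.succ) (Subtype.ext_iff.mp hab)
    simp only [Fin.cons_succ] at this
    exact Fin.castSucc_injective n this
  · rintro ⟨π, hπ, h0⟩
    have hb := hπ.1
    have hne : ∀ i : Fin n, π i.succ ≠ Fin.last n := by
      intro i h
      have := hb.injective (h.trans h0.symm)
      exact absurd this (Fin.succ_ne_zero i)
    set σ : Fin n → Fin n := fun i => (π i.succ).castPred (hne i) with hσdef
    have hrepr : π = Fin.cons (Fin.last n) (Fin.castSucc ∘ σ) := by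
      funext i
      induction i using Fin.cases with
      | zero => rw [Fin.cons_zero, h0]
      | succ i => rw [Fin.cons_succ]; simp [hσdef]
    have hcs : StrictMono (Fin.castSucc : Fin n → Fin (n+1)) := Fin.strictMono_castSucc
    have hlt : ∀ i, (Fin.castSucc ∘ σ) i < Fin.last n := fun i => Fin.castSucc_lt_last (σ i)
    have hσmem : σ ∈ Sset n (d+2) := by
      obtain ⟨hb', h1, h2, h3, h4⟩ := hπ
      rw [hrepr] at h1 h2 h3 h4
      refine ⟨?_, ?_, ?_, ?_, ?_⟩
      · apply Finite.injective_iff_bijective.mp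
        intro a b hab
        have h5 : π a.succ = π b.succ := by
          have := congrArg Fin.castSucc hab
          simpa [hσdef, Fin.castSucc_castPred] using this
        exact Fin.succ_injective n (hb.injective h5)
      · rw [avoids_iff, cons_132 hlt, containsA_comp_left hcs] at h1; exact h1
      · rw [avoids_iff, cons_2341 hlt, containsA_comp_left hcs] at h2; exact h2
      · rw [avoids_iff, cons_3241 hlt, containsA_comp_left hcs] at h3; exact h3
      · rw [avoids_iff, show d+3 = (d+2)+1 from rfl, cons_dec hlt] at h4
        intro h
        exact h4 (Or.inr ((containsA_comp_left hcs).mpr h))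
    exact ⟨⟨σ, hσmem⟩, Subtype.ext hrepr.symm⟩

end F1map

section F2map

variable {n d : ℕ}

def emb2 : Fin n → Fin (n+2) := fun x => ⟨x.val, by omega⟩

lemma emb2_strictMono : StrictMono (emb2 : Fin n → Fin (n+2)) := fun _ _ h => h

lemma cons_one {N m : ℕ} (v : Fin N) (ρ : Fin (m+1) → Fin N) :
    (Fin.cons v ρ : Fin (m+2) → Fin N) 1 = ρ 0 := by
  have h : (1 : Fin (m+2)) = Fin.succ 0 := rfl
  rw [h, Fin.cons_succ]

lemma F2_mem {σ : Fin n → Fin n} (hσ : σ ∈ Sset n (d+2)) :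
    Fin.cons (⟨n, by omega⟩ : Fin (n+2)) (Fin.cons (Fin.last (n+1)) (emb2 ∘ σ))
      ∈ Sset (n+2) (d+3) := by
  obtain ⟨hb, h1, h2, h3, h4⟩ := hσ
  have hcs : StrictMono (emb2 : Fin n → Fin (n+2)) := emb2_strictMono
  have hlt : ∀ i, (emb2 ∘ σ) i < (⟨n, by omega⟩ : Fin (n+2)) := fun i => (σ i).isLt
  have hvw : (⟨n, by omega⟩ : Fin (n+2)) < Fin.last (n+1) := Nat.lt_succ_self n
  refine ⟨?_, ?_, ?_, ?_, ?_⟩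
  · apply Finite.injective_iff_bijective.mp
    intro a b hab
    induction a using Fin.cases with
    | zero =>
      induction b using Fin.cases with
      | zero => rfl
      | succ b =>
        rw [Fin.cons_zero, Fin.cons_succ] at hab
        induction b using Fin.cases with
        | zero => rw [Fin.cons_zero] at hab; exact absurd hab hvw.ne
        | succ b => rw [Fin.cons_succ] at hab; exact absurd hab.symm (hlt b).ne
    | succ a =>
      induction b using Fin.cases with
      | zero =>
        rw [Fin.cons_zero, Fin.cons_succ] at hab
        induction a using Fin.cases with
        | zero => rw [Fin.cons_zero] at hab; exact absurd hab.symm hvw.ne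
        | succ a => rw [Fin.cons_succ] at hab; exact absurd hab (hlt a).ne
      | succ b =>
        rw [Fin.cons_succ, Fin.cons_succ] at hab
        apply congrArg Fin.succ
        induction a using Fin.cases with
        | zero =>
          induction b using Fin.cases with
          | zero => rfl
          | succ b =>
            rw [Fin.cons_zero, Fin.cons_succ] at hab
            exact absurd hab.symm (lt_trans (hlt b) hvw).ne
        | succ a =>
          induction b using Fin.cases with
          | zero =>
            rw [Fin.cons_zero, Fin.cons_succ] at hab
            exact absurd hab (lt_trans (hlt a) hvw).ne
          | succ b =>
            rw [Fin.cons_succ, Fin.cons_succ] at hab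
            exact congrArg Fin.succ (hb.injective (hcs.injective hab))
  · rw [avoids_iff, cc_132 hlt hvw, containsA_comp_left hcs]; exact h1
  · rw [avoids_iff, cc_2341 hlt hvw, containsA_comp_left hcs]; exact h2
  · rw [avoids_iff, cc_3241 hlt hvw, containsA_comp_left hcs]; exact h3
  · rw [avoids_iff, show d+3 = (d+1)+2 from rfl, cc_dec hlt hvw]
    rintro (h | h)
    · exact h4 (containsA_dec_mono ((containsA_comp_left hcs).mp h))
    · exact h4 ((containsA_comp_left hcs).mp h)

lemma cardF2 (n d : ℕ) :
    Nat.card {π : Fin (n+2) → Fin (n+2) |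
        π ∈ Sset (n+2) (d+3) ∧ π 0 = (⟨n, by omega⟩ : Fin (n+2)) ∧
          π 1 = Fin.last (n+1)} =
      Nat.card (Sset n (d+2)) := by
  symm
  apply Nat.card_eq_of_bijective
    (f := fun σ : Sset n (d+2) =>
      (⟨Fin.cons (⟨n, by omega⟩ : Fin (n+2))
          (Fin.cons (Fin.last (n+1)) (emb2 ∘ (σ : Fin n → Fin n))),
        F2_mem σ.2, Fin.cons_zero _ _, by rw [cons_one, Fin.cons_zero]⟩ :
        {π : Fin (n+2) → Fin (n+2) |
          π ∈ Sset (n+2) (d+3) ∧ π 0 = (⟨n, by omega⟩ : Fin (n+2)) ∧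
            π 1 = Fin.last (n+1)}))
  constructor
  · intro a b hab
    apply Subtype.ext
    funext i
    have := congrArg (fun f => (f : Fin (n+2) → Fin (n+2)) i.succ.succ) (Subtype.ext_iff.mp hab)
    simp only [Fin.cons_succ] at this
    apply Fin.ext
    simpa [emb2, Fin.ext_iff] using this
  · rintro ⟨π, hπ, h0, h1⟩
    have hb := hπ.1
    have hval : ∀ i : Fin n, (π i.succ.succ).val < n := by
      intro i
      have hne0 : π i.succ.succ ≠ π 0 := fun h => by
        have := hb.injective h; exact absurd this (Fin.succ_ne_zero _)
      have hne1 : π i.succ.succ ≠ π 1 := fun h => by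
        have := hb.injective h
        rw [Fin.ext_iff] at this
        simp at this
      rw [h0] at hne0; rw [h1] at hne1
      have hle := (π i.succ.succ).isLt
      have e0 : (π i.succ.succ).val ≠ n := fun h => hne0 (Fin.ext (by simpa using h))
      have e1 : (π i.succ.succ).val ≠ n + 1 := fun h => hne1 (Fin.ext (by simpa using h))
      omega
    set σ : Fin n → Fin n := fun i => ⟨(π i.succ.succ).val, hval i⟩ with hσdef
    have hrepr : π = Fin.cons (⟨n, by omega⟩ : Fin (n+2))
        (Fin.cons (Fin.last (n+1)) (emb2 ∘ σ)) := by
      funext i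
      induction i using Fin.cases with
      | zero => rw [Fin.cons_zero, h0]
      | succ i =>
        rw [Fin.cons_succ]
        induction i using Fin.cases with
        | zero => rw [Fin.cons_zero, ← h1]; rfl
        | succ i =>
          rw [Fin.cons_succ]
          apply Fin.ext
          rfl
    have hcs : StrictMono (emb2 : Fin n → Fin (n+2)) := emb2_strictMono
    have hlt : ∀ i, (emb2 ∘ σ) i < (⟨n, by omega⟩ : Fin (n+2)) := fun i => (σ i).isLt
    have hvw : (⟨n, by omega⟩ : Fin (n+2)) < Fin.last (n+1) := Nat.lt_succ_self n
    have hσmem : σ ∈ Sset n (d+2) := by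
      obtain ⟨hb', h1', h2', h3', h4'⟩ := hπ
      rw [hrepr] at h1' h2' h3' h4'
      refine ⟨?_, ?_, ?_, ?_, ?_⟩
      · apply Finite.injective_iff_bijective.mp
        intro a b hab
        have h5 : π a.succ.succ = π b.succ.succ := by
          apply Fin.ext
          simpa [hσdef, Fin.ext_iff] using hab
        have := hb.injective h5
        exact Fin.succ_injective n (Fin.succ_injective (n+1) this)
      · rw [avoids_iff, cc_132 hlt hvw, containsA_comp_left hcs] at h1'; exact h1'
      · rw [avoids_iff, cc_2341 hlt hvw, containsA_comp_left hcs] at h2'; exact h2'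
      · rw [avoids_iff, cc_3241 hlt hvw, containsA_comp_left hcs] at h3'; exact h3'
      · rw [avoids_iff, show d+3 = (d+1)+2 from rfl, cc_dec hlt hvw] at h4'
        intro h
        exact h4' (Or.inr ((containsA_comp_left hcs).mpr h))
    exact ⟨⟨σ, hσmem⟩, Subtype.ext hrepr.symm⟩

end F2map

section Structure

variable {N : ℕ} {π : Fin N → Fin N}

lemma contains_132' {i j k : Fin N} (hij : i < j) (hjk : j < k)
    (h1 : π i < π k) (h2 : π k < π j) : ContainsA π ![1,3,2] := by
  have h3 : π i < π j := lt_trans h1 h2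
  refine ⟨![i,j,k], ?_, ?_⟩
  · intro a b hab
    fin_cases a <;> fin_cases b <;>
      first
        | exact absurd hab (by decide)
        | exact hij | exact hjk | exact lt_trans hij hjk
  · intro a b
    fin_cases a <;> fin_cases b <;>
      first
        | exact iff_of_false (by decide) (lt_irrefl _)
        | exact iff_of_true (by decide) h1 | exact iff_of_true (by decide) h2
        | exact iff_of_true (by decide) h3
        | exact iff_of_false (by decide) (lt_asymm h1)
        | exact iff_of_false (by decide) (lt_asymm h2)
        | exact iff_of_false (by decide) (lt_asymm h3)

lemma contains_2341' {i j k l : Fin N} (hij : i < j) (hjk : j < k) (hkl : k < l)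
    (h1 : π i < π j) (h2 : π j < π k) (h3 : π l < π i) : ContainsA π ![2,3,4,1] := by
  have h4 : π i < π k := lt_trans h1 h2
  have h5 : π l < π j := lt_trans h3 h1
  have h6 : π l < π k := lt_trans h5 h2
  refine ⟨![i,j,k,l], ?_, ?_⟩
  · intro a b hab
    fin_cases a <;> fin_cases b <;>
      first
        | exact absurd hab (by decide)
        | exact hij | exact hjk | exact hkl
        | exact lt_trans hij hjk | exact lt_trans hjk hkl
        | exact lt_trans hij (lt_trans hjk hkl)
  · intro a b
    fin_cases a <;> fin_cases b <;>
      first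
        | exact iff_of_false (by decide) (lt_irrefl _)
        | exact iff_of_true (by decide) h1 | exact iff_of_true (by decide) h2
        | exact iff_of_true (by decide) h3 | exact iff_of_true (by decide) h4
        | exact iff_of_true (by decide) h5 | exact iff_of_true (by decide) h6
        | exact iff_of_false (by decide) (lt_asymm h1) | exact iff_of_false (by decide) (lt_asymm h2)
        | exact iff_of_false (by decide) (lt_asymm h3) | exact iff_of_false (by decide) (lt_asymm h4)
        | exact iff_of_false (by decide) (lt_asymm h5) | exact iff_of_false (by decide) (lt_asymm h6)

lemma contains_3241' {i j k l : Fin N} (hij : i < j) (hjk : j < k) (hkl : k < l)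
    (h1 : π j < π i) (h2 : π i < π k) (h3 : π l < π j) : ContainsA π ![3,2,4,1] := by
  have h4 : π j < π k := lt_trans h1 h2
  have h5 : π l < π i := lt_trans h3 h1
  have h6 : π l < π k := lt_trans h5 h2
  refine ⟨![i,j,k,l], ?_, ?_⟩
  · intro a b hab
    fin_cases a <;> fin_cases b <;>
      first
        | exact absurd hab (by decide)
        | exact hij | exact hjk | exact hkl
        | exact lt_trans hij hjk | exact lt_trans hjk hkl
        | exact lt_trans hij (lt_trans hjk hkl)
  · intro a b
    fin_cases a <;> fin_cases b <;>
      first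
        | exact iff_of_false (by decide) (lt_irrefl _)
        | exact iff_of_true (by decide) h1 | exact iff_of_true (by decide) h2
        | exact iff_of_true (by decide) h3 | exact iff_of_true (by decide) h4
        | exact iff_of_true (by decide) h5 | exact iff_of_true (by decide) h6
        | exact iff_of_false (by decide) (lt_asymm h1) | exact iff_of_false (by decide) (lt_asymm h2)
        | exact iff_of_false (by decide) (lt_asymm h3) | exact iff_of_false (by decide) (lt_asymm h4)
        | exact iff_of_false (by decide) (lt_asymm h5) | exact iff_of_false (by decide) (lt_asymm h6)

lemma structureB {n : ℕ} {π : Fin (n+3) → Fin (n+3)}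
    (hb : Function.Bijective π) (h1 : Avoids π ![1,3,2]) (h2 : Avoids π ![2,3,4,1])
    (h3 : Avoids π ![3,2,4,1]) (hl : π (Fin.last (n+2)) ≠ Fin.last (n+2)) :
    π 0 = Fin.last (n+2) ∨
      (π 0 = (⟨n+1, by omega⟩ : Fin (n+3)) ∧ π 1 = Fin.last (n+2)) := by
  obtain ⟨p, hp⟩ := hb.surjective (Fin.last (n+2))
  rcases Nat.lt_or_ge p.val 2 with hp2 | hp2
  · interval_cases h : p.val
    · -- p = 0
      left
      have : p = 0 := Fin.ext h
      rwa [this] at hp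
    · -- p = 1
      right
      have hp1 : p = 1 := Fin.ext h
      rw [hp1] at hp
      refine ⟨?_, hp⟩
      have klem : ∀ k : Fin (n+3), 2 ≤ k.val → π k < π 0 := by
        intro k hk
        by_contra hcon
        push_neg at hcon
        have hne : π 0 ≠ π k := fun hcontra => by
          have := hb.injective hcontra
          rw [Fin.ext_iff] at this
          simp at this
          omega
        have h0k : π 0 < π k := lt_of_le_of_ne hcon hne
        have hklast : π k < Fin.last (n+2) := by
          rw [Fin.lt_last_iff_ne_last]
          intro hcontra
          have := hb.injective (hcontra.trans hp.symm)
          rw [this] at hk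
          simp at hk
        exact h1 (contains_132' (i := 0) (j := 1) (k := k)
          (by rw [Fin.lt_def]; simp) (by rw [Fin.lt_def]; simp; omega)
          h0k (by rwa [hp]))
      have hne_last : π 0 ≠ Fin.last (n+2) := by
        intro hcontra
        have := hb.injective (hcontra.trans hp.symm)
        rw [Fin.ext_iff] at this
        simp at this
      obtain ⟨q, hq⟩ := hb.surjective (⟨n+1, by omega⟩ : Fin (n+3))
      rcases Nat.lt_or_ge q.val 2 with hq2 | hq2
      · interval_cases hqv : q.val
        · have : q = 0 := Fin.ext hqv
          rwa [this] at hq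
        · have : q = 1 := Fin.ext hqv
          rw [this] at hq
          rw [hp] at hq
          exfalso
          rw [Fin.ext_iff] at hq
          simp [Fin.last] at hq
      · exfalso
        have := klem q hq2
        rw [hq] at this
        have h0le : (π 0).val ≤ n + 1 := by
          have := (π 0).isLt
          have : (π 0).val ≠ n + 2 := fun h => hne_last (Fin.ext (by simpa [Fin.last] using h))
          omega
        rw [Fin.lt_def] at this
        simp at this
        omega
  · -- 2 ≤ p
    exfalso
    have hplast : p ≠ Fin.last (n+2) := by
      intro hcontra
      rw [hcontra] at hp
      exact hl hp
    have hplt : p < Fin.last (n+2) := Fin.lt_last_iff_ne_last.mpr hplast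
    have claim : ∀ i j : Fin (n+3), i < p → p < j → π j < π i := by
      intro i j hi hj
      by_contra hcon
      push_neg at hcon
      have hne : π i ≠ π j := fun hcontra => by
        have := hb.injective hcontra
        rw [this] at hi
        exact absurd (lt_trans hi hj) (lt_irrefl j)
      have hij' : π i < π j := lt_of_le_of_ne hcon hne
      have hjlast : π j < Fin.last (n+2) := by
        rw [Fin.lt_last_iff_ne_last]
        intro hcontra
        have := hb.injective (hcontra.trans hp.symm)
        rw [this] at hj
        exact lt_irrefl p hj
      exact h1 (contains_132' hi hj hij' (by rwa [hp]))
    have h0p : (0 : Fin (n+3)) < p := by rw [Fin.lt_def]; simp only [Fin.val_zero]; omega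
    have h1p : (1 : Fin (n+3)) < p := by rw [Fin.lt_def]; simp; omega
    have hA : π (Fin.last (n+2)) < π 0 := claim 0 (Fin.last (n+2)) h0p hplt
    have hB : π (Fin.last (n+2)) < π 1 := claim 1 (Fin.last (n+2)) h1p hplt
    have h01 : (0 : Fin (n+3)) < 1 := by rw [Fin.lt_def]; simp
    have hplastne : ∀ i : Fin (n+3), i < p → π i < π p := by
      intro i hi
      rw [hp, Fin.lt_last_iff_ne_last]
      intro hcontra
      have := hb.injective (hcontra.trans hp.symm)
      rw [this] at hi
      exact lt_irrefl p hi
    rcases lt_trichotomy (π 0) (π 1) with hlt | heq | hgt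
    · exact h2 (contains_2341' h01 h1p hplt hlt
        (lt_of_lt_of_le (hplastne 1 h1p) (by rw [hp])) hA)
    · have := hb.injective heq
      rw [Fin.ext_iff] at this
      simp at this
    · exact h3 (contains_3241' h01 h1p hplt hgt
        (lt_of_lt_of_le (hplastne 0 h0p) (by rw [hp])) hB)

end Structure

lemma master (n d : ℕ) :
    Nat.card (Sset (n+3) (d+3)) =
      Nat.card (Sset (n+2) (d+3)) + Nat.card (Sset (n+2) (d+2)) +
        Nat.card (Sset (n+1) (d+2)) := by
  classical
  set X₁ : Set (Fin (n+3) → Fin (n+3)) :=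
    {π | π ∈ Sset (n+3) (d+3) ∧ π (Fin.last (n+2)) = Fin.last (n+2)} with hX1
  set X₂ : Set (Fin (n+3) → Fin (n+3)) :=
    {π | π ∈ Sset (n+3) (d+3) ∧ π 0 = Fin.last (n+2)} with hX2
  set X₃ : Set (Fin (n+3) → Fin (n+3)) :=
    {π | π ∈ Sset (n+3) (d+3) ∧ π 0 = (⟨n+1, by omega⟩ : Fin (n+3)) ∧
      π 1 = Fin.last (n+2)} with hX3
  have hunion : Sset (n+3) (d+3) = X₁ ∪ (X₂ ∪ X₃) := by
    ext π
    constructor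
    · intro hπ
      by_cases hlast : π (Fin.last (n+2)) = Fin.last (n+2)
      · exact Or.inl ⟨hπ, hlast⟩
      · obtain ⟨hb, h1, h2, h3, h4⟩ := hπ
        rcases structureB hb h1 h2 h3 hlast with h | ⟨ha, hb'⟩
        · exact Or.inr (Or.inl ⟨⟨hb, h1, h2, h3, h4⟩, h⟩)
        · exact Or.inr (Or.inr ⟨⟨hb, h1, h2, h3, h4⟩, ha, hb'⟩)
    · rintro (h | h | h) <;> exact h.1
  have hd12 : Disjoint X₁ X₂ := by
    rw [Set.disjoint_left]
    rintro π ⟨hπ, hlast⟩ ⟨-, h0⟩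
    have := hπ.1.injective (h0.trans hlast.symm)
    rw [Fin.ext_iff] at this
    simp [Fin.last] at this
  have hd13 : Disjoint X₁ X₃ := by
    rw [Set.disjoint_left]
    rintro π ⟨hπ, hlast⟩ ⟨-, -, h1⟩
    have := hπ.1.injective (h1.trans hlast.symm)
    rw [Fin.ext_iff] at this
    simp [Fin.last] at this
  have hd23 : Disjoint X₂ X₃ := by
    rw [Set.disjoint_left]
    rintro π ⟨hπ, h0⟩ ⟨-, h0', -⟩
    rw [h0] at h0'
    rw [Fin.ext_iff] at h0'
    simp [Fin.last] at h0'
  have hcard : Nat.card (Sset (n+3) (d+3)) = X₁.ncard + X₂.ncard + X₃.ncard := by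
    rw [Nat.card_coe_set_eq, hunion]
    rw [Set.ncard_union_eq (Set.disjoint_union_right.mpr ⟨hd12, hd13⟩)
      (Set.toFinite _) (Set.toFinite _)]
    rw [Set.ncard_union_eq hd23 (Set.toFinite _) (Set.toFinite _)]
    ring
  rw [hcard]
  have e1 : X₁.ncard = Nat.card (Sset (n+2) (d+3)) := by
    rw [← Nat.card_coe_set_eq]
    exact cardE (n+2) (d+1)
  have e2 : X₂.ncard = Nat.card (Sset (n+2) (d+2)) := by
    rw [← Nat.card_coe_set_eq]
    exact cardF1 (n+2) d
  have e3 : X₃.ncard = Nat.card (Sset (n+1) (d+2)) := by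
    rw [← Nat.card_coe_set_eq]
    exact cardF2 (n+1) d
  rw [e1, e2, e3]

section Small

lemma contains_dec2' {N : ℕ} {π : Fin N → Fin N} {i j : Fin N} (hij : i < j)
    (h : π j < π i) : ContainsA π (Dec 2) := by
  refine ⟨![i,j], ?_, ?_⟩
  · intro a b hab
    fin_cases a <;> fin_cases b <;>
      first
        | exact absurd hab (by decide)
        | exact hij
  · intro a b
    fin_cases a <;> fin_cases b <;>
      first
        | exact iff_of_false (by decide) (lt_irrefl _)
        | exact iff_of_true (by decide) h
        | exact iff_of_false (by decide) (lt_asymm h)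

lemma id_mem_Sset (n d : ℕ) (hd : 2 ≤ d) : (id : Fin n → Fin n) ∈ Sset n d := by
  have key : ∀ (k : ℕ) (p : Fin k → ℕ) (i₀ j₀ : Fin k), i₀ < j₀ → p j₀ < p i₀ →
      ¬ ContainsA (id : Fin n → Fin n) p := by
    rintro k p i₀ j₀ hij hp ⟨f, hf, hc⟩
    have := (hc i₀ j₀).mpr
    simp only [id_eq] at this
    have h2 := (hc j₀ i₀).mp hp
    simp only [id_eq] at h2
    exact absurd (hf hij) (lt_asymm h2)
  refine ⟨Function.bijective_id, ?_, ?_, ?_, ?_⟩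
  · exact key 3 ![1,3,2] 1 2 (by decide) (by decide)
  · exact key 4 ![2,3,4,1] 2 3 (by decide) (by decide)
  · exact key 4 ![3,2,4,1] 0 1 (by decide) (by decide)
  · obtain ⟨d', rfl⟩ : ∃ d', d = d' + 2 := ⟨d - 2, by omega⟩
    refine key (d'+2) (Dec (d'+2)) 0 (Fin.last (d'+1)) ?_ ?_
    · rw [Fin.lt_def]; simp
    · simp [Dec, Fin.last]

lemma card_Sset_d2 (n : ℕ) : Nat.card (Sset n 2) = 1 := by
  have h : Sset n 2 = {id} := by
    ext π
    constructor
    · rintro ⟨hb, -, -, -, h4⟩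
      have hmono : StrictMono π := by
        intro i j hij
        rcases lt_trichotomy (π i) (π j) with h | h | h
        · exact h
        · exact absurd (hb.injective h) (ne_of_lt hij)
        · exact absurd (contains_dec2' hij h) h4
      have : π = id := by
        funext i
        apply Fin.ext
        exact Fin.coe_orderIso_apply (StrictMono.orderIsoOfSurjective π hmono hb.surjective) i
      simp [this, Set.mem_singleton_iff]
    · rintro rfl
      exact id_mem_Sset n 2 (by omega)
  rw [Nat.card_coe_set_eq, h, Set.ncard_singleton]

lemma Sset_one_eq (d : ℕ) (hd : 2 ≤ d) : Sset 1 d = Set.univ := by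
  ext π
  simp only [Set.mem_univ, iff_true]
  have hbij : Function.Bijective π := by
    have : π = id := by
      funext i
      apply Subsingleton.elim
    rw [this]; exact Function.bijective_id
  refine ⟨hbij, ?_, ?_, ?_, ?_⟩ <;>
    first
      | exact not_containsA_of_lt _ _ (by omega)

lemma card_Sset_one (d : ℕ) (hd : 2 ≤ d) : Nat.card (Sset 1 d) = 1 := by
  rw [Nat.card_coe_set_eq, Sset_one_eq d hd, Set.ncard_univ, Nat.card_eq_fintype_card]
  simp

lemma card_Sset_two (d : ℕ) (hd : 3 ≤ d) : Nat.card (Sset 2 d) = 2 := by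
  have h : Sset 2 d = {(id : Fin 2 → Fin 2), ![1, 0]} := by
    ext π
    constructor
    · rintro ⟨hb, -, -, -, -⟩
      by_cases h0 : π 0 = 0
      · left
        have h1 : π 1 = 1 := by
          rcases Fin.exists_fin_two.mp ⟨π 1, rfl⟩ with h | h
          · exact absurd (hb.injective (h.trans h0.symm)) (by decide)
          · exact h
        funext i
        rcases Fin.exists_fin_two.mp ⟨i, rfl⟩ with h | h <;> rw [h] <;> simp [h0, h1]
      · right
        have h0' : π 0 = 1 := by
          rcases Fin.exists_fin_two.mp ⟨π 0, rfl⟩ with h | h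
          · exact absurd h h0
          · exact h
        have h1 : π 1 = 0 := by
          rcases Fin.exists_fin_two.mp ⟨π 1, rfl⟩ with h | h
          · exact h
          · exact absurd (hb.injective (h.trans h0'.symm)) (by decide)
        funext i
        rcases Fin.exists_fin_two.mp ⟨i, rfl⟩ with h | h <;> rw [h] <;> simp [h0', h1]
    · intro h
      have hb : Function.Bijective π := by
        rcases h with rfl | h
        · exact Function.bijective_id
        · rw [Set.mem_singleton_iff] at h
          subst h
          decide
      refine ⟨hb, ?_, ?_, ?_, ?_⟩ <;> exact not_containsA_of_lt _ _ (by omega)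
  rw [Nat.card_coe_set_eq, h, Set.ncard_pair (by decide)]

end Small

section Counting

lemma count3 (n : ℕ) (hn : 2 ≤ n) : (Nat.card (Sset n 3) : ℚ) = 2*n - 2 := by
  induction n, hn using Nat.le_induction with
  | base => rw [card_Sset_two 3 (by omega)]; norm_num
  | succ n hn ih =>
    obtain ⟨m, rfl⟩ : ∃ m, n = m + 2 := ⟨n - 2, by omega⟩
    have h := master m 0
    rw [show m+2+1 = m+3 from rfl, h, card_Sset_d2, card_Sset_d2]
    push_cast
    push_cast at ih
    linarith

lemma c34 : Nat.card (Sset 3 4) = 5 := by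
  have h := master 0 1
  rw [h, card_Sset_two 4 (by omega), card_Sset_two 3 (by omega), card_Sset_one 3 (by omega)]

lemma c35 : Nat.card (Sset 3 5) = 5 := by
  have h := master 0 2
  rw [h, card_Sset_two 5 (by omega), card_Sset_two 4 (by omega), card_Sset_one 4 (by omega)]

lemma count4 (n : ℕ) (hn : 3 ≤ n) : (Nat.card (Sset n 4) : ℚ) = 2*n^2 - 8*n + 11 := by
  induction n, hn using Nat.le_induction with
  | base => rw [c34]; norm_num
  | succ n hn ih =>
    obtain ⟨m, rfl⟩ : ∃ m, n = m + 2 := ⟨n - 2, by omega⟩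
    have h := master m 1
    rw [show m+2+1 = m+3 from rfl, h]
    have h1 := count3 (m+2) (by omega)
    have h2 := count3 (m+1) (by omega)
    push_cast at ih h1 h2 ⊢
    ring_nf
    ring_nf at ih h1 h2
    linarith

lemma count5 (n : ℕ) (hn : 4 ≤ n) :
    (Nat.card (Sset n 5) : ℚ) = 4/3 * n^3 - 12 * n^2 + 128/3 * n - 52 := by
  induction n, hn using Nat.le_induction with
  | base =>
    have h := master 1 2
    rw [show (4:ℕ) = 1+3 from rfl, h, c35, c34, card_Sset_two 4 (by omega)]
    norm_num
  | succ n hn ih =>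
    obtain ⟨m, rfl⟩ : ∃ m, n = m + 3 := ⟨n - 3, by omega⟩
    have h := master (m+1) 2
    rw [show m+3+1 = m+1+3 from rfl, h]
    have h1 := count4 (m+3) (by omega)
    have h2 := count4 (m+2) (by omega)
    push_cast at ih h1 h2 ⊢
    ring_nf
    ring_nf at ih h1 h2
    linarith

end Counting

theorem stmt_14 (n : ℕ) (hn : 4 ≤ n) :
    (Nat.card ↥{π ∈ TSS132 n | Avoids π ![5,4,3,2,1]} : ℚ) =
      4/3 * n^3 - 12 * n^2 + 128/3 * n - 52 := by
  have hpat : (![5,4,3,2,1] : Fin 5 → ℕ) = Dec 5 := by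
    funext i
    fin_cases i <;> rfl
  have hset : {π ∈ TSS132 n | Avoids π ![5,4,3,2,1]} = Sset n 5 := by
    ext π
    rw [hpat]
    simp only [Set.mem_sep_iff, TSS132, Sset, Set.mem_setOf_eq]
    tauto
  rw [hset]
  exact count5 n hn
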